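/- Let G be a finite simple graph on vertex set V (|V| ≥ 2) with nonnegative edge capacities, let ε ≥ 0, and let N = (V, c_N) be the complete graph on V with edge weights satisfying mincut_G(u,v) ≤ c_N(u,v) ≤ (1+ε)·mincut_G(u,v) for all distinct u, v ∈ V. Let T be a maximum spanning tree of N, i.e., a spanning tree of the complete graph on V whose total c_N-weight is maximum. Then T is a (1+ε)-approximate flow-equivalent tree of G: for every pair of distinct u, v ∈ V, writing u = x_1, …, x_k = v for the unique path from u to v in T and M := min_{1 ≤ i < k} c_N(x_i, x_{i+1}), we have mincut_G(u,v) ≤ M ≤ (1+ε)·mincut_G(u,v). -/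

import Mathlib

open SimpleGraph

/-- The capacity of the cut `(S, Sᶜ)` in the graph `G` with edge capacities `c`:
the sum of `c u v` over all edges `{u,v}` of `G` with `u ∈ S` and `v ∉ S`
(each cut edge counted once). -/
noncomputable def cutCap {V : Type*} [Fintype V] [DecidableEq V]
    (G : SimpleGraph V) [DecidableRel G.Adj] (c : V → V → ℝ) (S : Finset V) : ℝ :=
  ∑ u ∈ S, ∑ v ∈ Sᶜ, if G.Adj u v then c u v else 0

/-- The minimum `s`-`t` cut value in `G` with edge capacities `c`:
the infimum of `cutCap` over all vertex sets `S` with `s ∈ S` and `t ∉ S`. -/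
noncomputable def mincut {V : Type*} [Fintype V] [DecidableEq V]
    (G : SimpleGraph V) [DecidableRel G.Adj] (c : V → V → ℝ) (s t : V) : ℝ :=
  sInf {x : ℝ | ∃ S : Finset V, s ∈ S ∧ t ∉ S ∧ cutCap G c S = x}



lemma trail_dart_split {V : Type*} {G : SimpleGraph V} {u v : V} (p : G.Walk u v)
    (hp : p.IsTrail) (d : G.Dart) (hd : d ∈ p.darts) :
    ∃ (q1 : G.Walk u d.toProd.1) (q2 : G.Walk d.toProd.2 v),
      d.edge ∉ q1.edges ∧ d.edge ∉ q2.edges := by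
  induction p with
  | nil => simp at hd
  | cons h p ih =>
    rename_i a b w
    rw [Walk.darts_cons, List.mem_cons] at hd
    have hnodup := hp.edges_nodup
    rw [Walk.edges_cons, List.nodup_cons] at hnodup
    rcases hd with rfl | hd
    · exact ⟨Walk.nil, p, by simp, by simpa [Sym2.mk] using hnodup.1⟩
    · obtain ⟨q1, q2, hq1, hq2⟩ := ih hp.of_cons hd
      have hmem : d.edge ∈ p.edges := by
        rw [Walk.edges]
        exact List.mem_map_of_mem hd
      have hne : d.edge ≠ s(a, b) := fun he => hnodup.1 (he ▸ hmem)
      exact ⟨Walk.cons h q1, q2, by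
        rw [Walk.edges_cons, List.mem_cons]
        rintro (he | he)
        · exact hne he
        · exact hq1 he, hq2⟩

lemma mincut_set_finite {V : Type*} [Fintype V] [DecidableEq V]
    (G : SimpleGraph V) [DecidableRel G.Adj] (c : V → V → ℝ) (s t : V) :
    {x : ℝ | ∃ S : Finset V, s ∈ S ∧ t ∉ S ∧ cutCap G c S = x}.Finite := by
  apply Set.Finite.subset (Set.finite_range (cutCap G c))
  rintro x ⟨S, _, _, rfl⟩
  exact ⟨S, rfl⟩

lemma mincut_set_nonempty {V : Type*} [Fintype V] [DecidableEq V]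
    (G : SimpleGraph V) [DecidableRel G.Adj] (c : V → V → ℝ) {s t : V} (h : s ≠ t) :
    {x : ℝ | ∃ S : Finset V, s ∈ S ∧ t ∉ S ∧ cutCap G c S = x}.Nonempty :=
  ⟨cutCap G c {s}, {s}, Finset.mem_singleton_self s,
    by simp [Ne.symm h], rfl⟩

lemma mincut_le {V : Type*} [Fintype V] [DecidableEq V]
    (G : SimpleGraph V) [DecidableRel G.Adj] (c : V → V → ℝ) {s t : V} (S : Finset V)
    (hs : s ∈ S) (ht : t ∉ S) : mincut G c s t ≤ cutCap G c S :=
  csInf_le (mincut_set_finite G c s t).bddBelow ⟨S, hs, ht, rfl⟩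

lemma mincut_mem {V : Type*} [Fintype V] [DecidableEq V]
    (G : SimpleGraph V) [DecidableRel G.Adj] (c : V → V → ℝ) {s t : V} (h : s ≠ t) :
    ∃ S : Finset V, s ∈ S ∧ t ∉ S ∧ cutCap G c S = mincut G c s t :=
  Set.Nonempty.csInf_mem (mincut_set_nonempty G c h) (mincut_set_finite G c s t)



section Exchange

variable {V : Type*} [Fintype V] [DecidableEq V]

/-- Exchange: replacing a tree edge `{x,y}` on the unique `u`-`v` path by the
non-edge `{u,v}` yields a tree. -/
lemma exchange_isTree (T : SimpleGraph V) (hT : T.IsTree)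
    {u v x y : V} (huv : u ≠ v) (hnadj : ¬ T.Adj u v)
    (hxy : T.Adj x y)
    (q1 : T.Walk u x) (q2 : T.Walk y v)
    (hq1 : s(x, y) ∉ q1.edges) (hq2 : s(x, y) ∉ q2.edges) :
    (T.deleteEdges {s(x, y)} ⊔ SimpleGraph.edge u v).IsTree := by
  set T' := T.deleteEdges {s(x, y)} ⊔ SimpleGraph.edge u v with hT'def
  have hdel_le : T.deleteEdges {s(x, y)} ≤ T' := le_sup_left
  -- walks in the deleted graph
  have hq1' : (T.deleteEdges {s(x, y)}).Reachable u x :=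
    ⟨q1.toDeleteEdges {s(x, y)} (fun e he hes => hq1 (by simpa using hes ▸ he))⟩
  have hq2' : (T.deleteEdges {s(x, y)}).Reachable y v :=
    ⟨q2.toDeleteEdges {s(x, y)} (fun e he hes => hq2 (by simpa using hes ▸ he))⟩
  have hadj_uv : T'.Adj u v := Or.inr (by rw [edge_adj]; exact ⟨Or.inl ⟨rfl, rfl⟩, huv⟩)
  -- the bridge property of {x,y} in T
  have hbridge : ¬ (T \ fromEdgeSet {s(x, y)}).Reachable x y :=
    (isAcyclic_iff_forall_adj_isBridge.mp hT.IsAcyclic hxy : _)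
  have hbridge' : ¬ (T.deleteEdges {s(x, y)}).Reachable x y := hbridge
  -- connectivity of T'
  have hxy' : T'.Reachable x y :=
    ((hq1'.mono hdel_le).symm.trans hadj_uv.reachable).trans (hq2'.mono hdel_le).symm
  have hstep : ∀ a b : V, T.Adj a b → T'.Reachable a b := by
    intro a b hab
    by_cases he : s(a, b) = s(x, y)
    · rw [Sym2.eq_iff] at he
      rcases he with ⟨rfl, rfl⟩ | ⟨rfl, rfl⟩
      · exact hxy'
      · exact hxy'.symm
    · exact (Adj.reachable (Or.inl (by rw [deleteEdges_adj]; exact ⟨hab, by simpa using he⟩)))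
  have hpre : T'.Preconnected := by
    intro a b
    obtain ⟨w⟩ := hT.isConnected.preconnected a b
    induction w with
    | nil => exact Reachable.refl _
    | cons h p ih => exact (hstep _ _ h).trans ih
  have hconn : T'.Connected := by
    haveI := hT.isConnected.nonempty
    exact ⟨hpre⟩
  refine ⟨hconn, ?_⟩
  -- acyclicity
  intro a w hw
  by_cases he : s(u, v) ∈ w.edges
  · have hreach : (T' \ fromEdgeSet {s(u, v)}).Reachable u v :=
      (adj_and_reachable_delete_edges_iff_exists_cycle.mpr ⟨a, w, hw, he⟩).2
    have hle2 : (T' \ fromEdgeSet {s(u, v)}) ≤ T.deleteEdges {s(x, y)} := by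
      intro p q hpq
      rcases hpq with ⟨hpq1, hpq2⟩
      rcases hpq1 with h' | h'
      · exact h'
      · exfalso
        rw [edge_adj] at h'
        apply hpq2
        rw [fromEdgeSet_adj]
        refine ⟨by rw [Set.mem_singleton_iff, Sym2.eq_iff]; exact h'.1, h'.2⟩
    have : (T.deleteEdges {s(x, y)}).Reachable x y :=
      (hq1'.symm.trans ((hreach.mono hle2).trans hq2'.symm)).symm.symm
    exact hbridge' this
  · have hsub : ∀ e ∈ w.edges, e ∈ T.edgeSet := by
      intro e hew
      have h1 := w.edges_subset_edgeSet hew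
      induction e with
      | h p q =>
        rw [mem_edgeSet] at h1 ⊢
        rcases h1 with h' | h'
        · exact h'.1
        · exfalso
          rw [edge_adj] at h'
          exact he (by rw [← show s(p,q) = s(u,v) from by rw [Sym2.eq_iff]; exact h'.1]; exact hew)
    exact hT.IsAcyclic (w.transfer T hsub) (hw.transfer hsub)

end Exchange



lemma sum_pair_ite {V : Type*} [Fintype V] [DecidableEq V] (f : V → V → ℝ) (p q : V) :
    ∑ a : V, ∑ b : V, (if a = p ∧ b = q then f a b else 0) = f p q := by
  simp [ite_and, Finset.sum_ite_eq', Finset.mem_univ]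

lemma exchange_weight {V : Type*} [Fintype V] [DecidableEq V]
    (T T' : SimpleGraph V) [DecidableRel T.Adj] [DecidableRel T'.Adj]
    (cN : V → V → ℝ) (hs : ∀ a b, cN a b = cN b a)
    {u v x y : V} (huv : u ≠ v) (hxyne : x ≠ y) (hnadj : ¬T.Adj u v) (hxy : T.Adj x y)
    (hT' : ∀ a b, T'.Adj a b ↔
      (T.Adj a b ∧ s(a, b) ≠ s(x, y)) ∨ ((a = u ∧ b = v ∨ a = v ∧ b = u) ∧ a ≠ b)) :
    ∑ a : V, ∑ b : V, (if T'.Adj a b then cN a b else 0)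
      = (∑ a : V, ∑ b : V, (if T.Adj a b then cN a b else 0)) - 2 * cN x y + 2 * cN u v := by
  have hpt : ∀ a b : V, (if T'.Adj a b then cN a b else 0)
      = (if T.Adj a b then cN a b else 0)
        - (if a = x ∧ b = y then cN a b else 0) - (if a = y ∧ b = x then cN a b else 0)
        + (if a = u ∧ b = v then cN a b else 0) + (if a = v ∧ b = u then cN a b else 0) := by
    intro a b
    have hT2 : T'.Adj a b ↔ (T.Adj a b ∧ ¬((a = x ∧ b = y) ∨ (a = y ∧ b = x)))
        ∨ ((a = u ∧ b = v) ∨ (a = v ∧ b = u)) := by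
      rw [hT' a b, Ne, Sym2.eq_iff]
      constructor
      · rintro (⟨h, hn⟩ | ⟨h, -⟩)
        · exact Or.inl ⟨h, hn⟩
        · exact Or.inr h
      · rintro (⟨h, hn⟩ | h)
        · exact Or.inl ⟨h, hn⟩
        · refine Or.inr ⟨h, ?_⟩
          rcases h with ⟨rfl, rfl⟩ | ⟨rfl, rfl⟩
          · exact huv
          · exact huv.symm
    simp only [hT2]
    have f1 : (a = x ∧ b = y) → T.Adj a b := by rintro ⟨rfl, rfl⟩; exact hxy
    have f2 : (a = y ∧ b = x) → T.Adj a b := by rintro ⟨rfl, rfl⟩; exact hxy.symm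
    have f3 : (a = u ∧ b = v) → ¬T.Adj a b := by rintro ⟨rfl, rfl⟩; exact hnadj
    have f4 : (a = v ∧ b = u) → ¬T.Adj a b := by
      rintro ⟨rfl, rfl⟩ h; exact hnadj h.symm
    have f5 : ¬((a = x ∧ b = y) ∧ (a = y ∧ b = x)) := by
      rintro ⟨⟨rfl, rfl⟩, h2, -⟩; exact hxyne h2
    have f6 : ¬((a = u ∧ b = v) ∧ (a = v ∧ b = u)) := by
      rintro ⟨⟨rfl, rfl⟩, h2, -⟩; exact huv h2
    by_cases hA : a = x ∧ b = y
    · have hAdj := f1 hA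
      have hB : ¬(a = y ∧ b = x) := fun h => f5 ⟨hA, h⟩
      have hC : ¬(a = u ∧ b = v) := fun h => f3 h hAdj
      have hD : ¬(a = v ∧ b = u) := fun h => f4 h hAdj
      have hL : ¬(T.Adj a b ∧ ¬((a = x ∧ b = y) ∨ (a = y ∧ b = x))
          ∨ ((a = u ∧ b = v) ∨ (a = v ∧ b = u))) := by
        rintro (⟨-, hn⟩ | h | h)
        · exact hn (Or.inl hA)
        · exact hC h
        · exact hD h
      rw [if_neg hL, if_pos hAdj, if_pos hA, if_neg hB, if_neg hC, if_neg hD]; ring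
    · by_cases hB : a = y ∧ b = x
      · have hAdj := f2 hB
        have hC : ¬(a = u ∧ b = v) := fun h => f3 h hAdj
        have hD : ¬(a = v ∧ b = u) := fun h => f4 h hAdj
        have hL : ¬(T.Adj a b ∧ ¬((a = x ∧ b = y) ∨ (a = y ∧ b = x))
            ∨ ((a = u ∧ b = v) ∨ (a = v ∧ b = u))) := by
          rintro (⟨-, hn⟩ | h | h)
          · exact hn (Or.inr hB)
          · exact hC h
          · exact hD h
        rw [if_neg hL, if_pos hAdj, if_neg hA, if_pos hB, if_neg hC, if_neg hD]; ring
      · by_cases hC : a = u ∧ b = v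
        · have hAdj := f3 hC
          have hD : ¬(a = v ∧ b = u) := fun h => f6 ⟨hC, h⟩
          have hL : (T.Adj a b ∧ ¬((a = x ∧ b = y) ∨ (a = y ∧ b = x))
              ∨ ((a = u ∧ b = v) ∨ (a = v ∧ b = u))) := Or.inr (Or.inl hC)
          rw [if_pos hL, if_neg hAdj, if_neg hA, if_neg hB, if_pos hC, if_neg hD]; ring
        · by_cases hD : a = v ∧ b = u
          · have hAdj := f4 hD
            have hL : (T.Adj a b ∧ ¬((a = x ∧ b = y) ∨ (a = y ∧ b = x))
                ∨ ((a = u ∧ b = v) ∨ (a = v ∧ b = u))) := Or.inr (Or.inr hD)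
            rw [if_pos hL, if_neg hAdj, if_neg hA, if_neg hB, if_neg hC, if_pos hD]; ring
          · by_cases hAdj : T.Adj a b
            · have hL : (T.Adj a b ∧ ¬((a = x ∧ b = y) ∨ (a = y ∧ b = x))
                  ∨ ((a = u ∧ b = v) ∨ (a = v ∧ b = u))) :=
                Or.inl ⟨hAdj, fun h => h.elim hA hB⟩
              rw [if_pos hL, if_pos hAdj, if_neg hA, if_neg hB, if_neg hC, if_neg hD]; ring
            · have hL : ¬(T.Adj a b ∧ ¬((a = x ∧ b = y) ∨ (a = y ∧ b = x))
                  ∨ ((a = u ∧ b = v) ∨ (a = v ∧ b = u))) := by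
                rintro (⟨h, -⟩ | h | h)
                · exact hAdj h
                · exact hC h
                · exact hD h
              rw [if_neg hL, if_neg hAdj, if_neg hA, if_neg hB, if_neg hC, if_neg hD]; ring
  calc ∑ a : V, ∑ b : V, (if T'.Adj a b then cN a b else 0)
      = ∑ a : V, ∑ b : V, ((if T.Adj a b then cN a b else 0)
        - (if a = x ∧ b = y then cN a b else 0) - (if a = y ∧ b = x then cN a b else 0)
        + (if a = u ∧ b = v then cN a b else 0) + (if a = v ∧ b = u then cN a b else 0)) := by
        simp_rw [hpt]
    _ = (∑ a : V, ∑ b : V, (if T.Adj a b then cN a b else 0))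
        - (∑ a : V, ∑ b : V, (if a = x ∧ b = y then cN a b else 0))
        - (∑ a : V, ∑ b : V, (if a = y ∧ b = x then cN a b else 0))
        + (∑ a : V, ∑ b : V, (if a = u ∧ b = v then cN a b else 0))
        + (∑ a : V, ∑ b : V, (if a = v ∧ b = u then cN a b else 0)) := by
        simp [Finset.sum_sub_distrib, Finset.sum_add_distrib]
    _ = (∑ a : V, ∑ b : V, (if T.Adj a b then cN a b else 0))
          - 2 * cN x y + 2 * cN u v := by
        rw [sum_pair_ite, sum_pair_ite, sum_pair_ite, sum_pair_ite, hs y x, hs v u]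
        ring

/-- Let `G` be a finite simple graph on `V` (`|V| ≥ 2`) with
nonnegative symmetric edge capacities `c`, let `ε ≥ 0`, and let `cN` be symmetric
edge weights on the complete graph on `V` with
`mincut(u,v) ≤ cN u v ≤ (1+ε) * mincut(u,v)` for all distinct `u, v`. Let `T` be a
maximum spanning tree of the complete graph with respect to `cN`. Then `T` is a
`(1+ε)`-approximate flow-equivalent tree of `G`: for all distinct `u, v`, the minimum
`M` of `cN` over the edges of the unique `u`-`v` path in `T` satisfies
`mincut(u,v) ≤ M ≤ (1+ε) * mincut(u,v)` — i.e. every edge of the path has `cN`-weight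
at least `mincut(u,v)`, and some edge has `cN`-weight at most `(1+ε) * mincut(u,v)`. -/
theorem maxSpanningTree_isApproxFlowEquivalent
    {V : Type*} [Fintype V] [DecidableEq V]
    (hV : 2 ≤ Fintype.card V)
    (G : SimpleGraph V) [DecidableRel G.Adj]
    (c : V → V → ℝ) (hsymm : ∀ u v, c u v = c v u) (hnonneg : ∀ u v, 0 ≤ c u v)
    (ε : ℝ) (hε : 0 ≤ ε)
    (cN : V → V → ℝ) (hcNsymm : ∀ u v, cN u v = cN v u)
    (hcN : ∀ u v : V, u ≠ v →
      mincut G c u v ≤ cN u v ∧ cN u v ≤ (1 + ε) * mincut G c u v)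
    (T : SimpleGraph V) [DecidableRel T.Adj] (hT : T.IsTree)
    (hmax : ∀ (T' : SimpleGraph V) [DecidableRel T'.Adj], T'.IsTree →
      ((1 : ℝ) / 2) * ∑ x, ∑ y, (if T'.Adj x y then cN x y else 0) ≤
        ((1 : ℝ) / 2) * ∑ x, ∑ y, (if T.Adj x y then cN x y else 0))
    (u v : V) (huv : u ≠ v)
    (p : T.Walk u v) (hp : p.IsPath) :
    (∀ d ∈ p.darts, mincut G c u v ≤ cN d.toProd.1 d.toProd.2) ∧
    (∃ d ∈ p.darts, cN d.toProd.1 d.toProd.2 ≤ (1 + ε) * mincut G c u v) := by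
  classical
  constructor
  · -- every path edge has weight at least mincut u v
    intro d hd
    rcases d with ⟨⟨x, y⟩, hxyT⟩
    by_cases hc : s(x, y) = s(u, v)
    · rw [Sym2.eq_iff] at hc
      rcases hc with ⟨rfl, rfl⟩ | ⟨rfl, rfl⟩
      · exact (hcN _ _ huv).1
      · rw [hcNsymm]
        exact (hcN _ _ huv).1
    · have hnadj : ¬ T.Adj u v := by
        intro hadj
        obtain ⟨q, -, huniq⟩ := hT.existsUnique_path u v
        have hsingle : (Walk.cons hadj Walk.nil).IsPath := by
          simp [Walk.cons_isPath_iff, hadj.ne]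
        have h1 : p = Walk.cons hadj Walk.nil := (huniq p hp).trans (huniq _ hsingle).symm
        rw [h1] at hd
        simp only [Walk.darts_cons, Walk.darts_nil, List.mem_singleton] at hd
        apply hc
        have h2 : x = u ∧ y = v := by
          simpa [Prod.ext_iff] using congrArg SimpleGraph.Dart.toProd hd
        rw [h2.1, h2.2]
      obtain ⟨q1, q2, hq1, hq2⟩ :=
        trail_dart_split p hp.isTrail ⟨(x, y), hxyT⟩ hd
      by_contra hlt
      push_neg at hlt
      have hm := (hcN u v huv).1
      have hcmlt : cN x y < cN u v := lt_of_lt_of_le hlt hm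
      set T' := T.deleteEdges {s(x, y)} ⊔ SimpleGraph.edge u v with hT'def
      have hT'tree : T'.IsTree := exchange_isTree T hT huv hnadj hxyT q1 q2 hq1 hq2
      letI : DecidableRel T'.Adj := Classical.decRel _
      have hadj' : ∀ a b, T'.Adj a b ↔
          (T.Adj a b ∧ s(a, b) ≠ s(x, y)) ∨ ((a = u ∧ b = v ∨ a = v ∧ b = u) ∧ a ≠ b) := by
        intro a b
        rw [hT'def]
        simp only [sup_adj, deleteEdges_adj, Set.mem_singleton_iff, SimpleGraph.edge_adj]
      have hW := exchange_weight T T' cN hcNsymm huv hxyT.ne hnadj hxyT hadj'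
      have hle := hmax T' hT'tree
      rw [hW] at hle
      linarith
  · -- some path edge has weight at most (1+ε) * mincut u v
    obtain ⟨S0, hu0, hv0, hS0⟩ := mincut_mem G c huv
    obtain ⟨d, hd, hd1, hd2⟩ := p.exists_boundary_dart (↑S0 : Set V)
      (by simpa using hu0) (by simpa using hv0)
    refine ⟨d, hd, ?_⟩
    have hne : d.toProd.1 ≠ d.toProd.2 := d.adj.ne
    have h1 : mincut G c d.toProd.1 d.toProd.2 ≤ cutCap G c S0 :=
      mincut_le G c S0 (by simpa using hd1) (by simpa using hd2)
    have h2 := (hcN _ _ hne).2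
    calc cN d.toProd.1 d.toProd.2 ≤ (1 + ε) * mincut G c d.toProd.1 d.toProd.2 := h2
      _ ≤ (1 + ε) * cutCap G c S0 := mul_le_mul_of_nonneg_left h1 (by linarith)
      _ = (1 + ε) * mincut G c u v := by rw [hS0]
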